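/- arXiv:2207.00955 — 6 statements merged into one kernel-verified Lean document; each statement's English description precedes it below -/
import Mathlib

section
/- Fix H > 0 and c > 0, and let f(t) = exp(H t) + c. Then: (i) f''(t) > 0 for all t ∈ ℝ (so the spacetime is inflationary at every time); (ii) f'(t) > 0 for all t (f is strictly increasing); (iii) f(t) > c for all t while inf_ℝ f = c > 0; and yet (iv) for every b ∈ ℝ, lim_{a → −∞} (1/(b−a)) ∫_a^b f'(t)/f(t) dt = 0. -/
open Real Filter Topology intervalIntegral

/-- For `f t = exp (H t) + c` with `H, c > 0`: `f'' > 0` everywhere (eternal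
inflation), `f' > 0` everywhere, `f > c` with `inf f = c > 0`, and yet the
past-asymptotic averaged Hubble parameter vanishes. -/
theorem eternally_inflating_example (H c : ℝ) (hH : 0 < H) (hc : 0 < c)
    (f : ℝ → ℝ) (hf : f = fun t : ℝ => Real.exp (H * t) + c) :
    (∀ t : ℝ, 0 < deriv (deriv f) t) ∧
    (∀ t : ℝ, 0 < deriv f t) ∧
    (∀ t : ℝ, c < f t) ∧
    (⨅ t : ℝ, f t) = c ∧ 0 < c ∧
    (∀ b : ℝ, Tendsto (fun a : ℝ => (1 / (b - a)) * ∫ t in a..b, deriv f t / f t)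
      atBot (𝓝 0)) := by
  have hpos : ∀ t : ℝ, c < f t := by
    intro t; rw [hf]; simpa using (Real.exp_pos (H * t))
  have h1 : ∀ t : ℝ, HasDerivAt f (H * Real.exp (H * t)) t := by
    intro t
    rw [hf]
    have := ((Real.hasDerivAt_exp (H * t)).comp t
      ((hasDerivAt_id t).const_mul H)).add_const c
    simpa [mul_comm] using this
  have hderiv : deriv f = fun t => H * Real.exp (H * t) := funext fun t => (h1 t).deriv
  have h2 : ∀ t : ℝ, HasDerivAt (deriv f) (H * (H * Real.exp (H * t))) t := by
    intro t
    rw [hderiv]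
    have := (((Real.hasDerivAt_exp (H * t)).comp t
      ((hasDerivAt_id t).const_mul H)).const_mul H)
    simpa [mul_comm, mul_assoc, mul_left_comm] using this
  refine ⟨?_, ?_, hpos, ?_, hc, ?_⟩
  · intro t
    rw [(h2 t).deriv]
    positivity
  · intro t
    rw [hderiv]
    positivity
  · -- infimum
    have htend : Tendsto f atBot (𝓝 c) := by
      rw [hf]
      have h0 : Tendsto (fun t : ℝ => H * t) atBot atBot :=
        tendsto_id.const_mul_atBot hH
      have := (Real.tendsto_exp_atBot.comp h0).add_const c
      simpa using this
    have hglb : IsGLB (Set.range f) c := by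
      constructor
      · rintro x ⟨t, rfl⟩; exact (hpos t).le
      · intro b hb
        exact ge_of_tendsto htend (Eventually.of_forall fun t => hb ⟨t, rfl⟩)
    exact hglb.ciInf_eq
  · intro b
    have hfc : ∀ t : ℝ, f t ≠ 0 := fun t => (hc.trans (hpos t)).ne'
    have hlog : ∀ t : ℝ, HasDerivAt (fun s => Real.log (f s)) (deriv f t / f t) t := by
      intro t
      have := (h1 t).log (hfc t)
      rw [hderiv]
      exact this
    have hcont : Continuous fun t => deriv f t / f t := by
      rw [hderiv, hf]
      fun_prop (disch := intro t; positivity)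
    have hint : ∀ a : ℝ, (∫ t in a..b, deriv f t / f t)
        = Real.log (f b) - Real.log (f a) := by
      intro a
      exact intervalIntegral.integral_eq_sub_of_hasDerivAt
        (fun t _ => hlog t) (hcont.intervalIntegrable a b)
    simp_rw [hint]
    have ht1 : Tendsto (fun a : ℝ => 1 / (b - a)) atBot (𝓝 0) := by
      have : Tendsto (fun a : ℝ => b - a) atBot atTop := by
        simpa [sub_eq_add_neg] using tendsto_atTop_add_const_left atBot b tendsto_neg_atBot_atTop
      simpa [one_div, Pi.inv_def] using this.inv_tendsto_atTop
    have htend : Tendsto f atBot (𝓝 c) := by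
      rw [hf]
      have h0 : Tendsto (fun t : ℝ => H * t) atBot atBot :=
        tendsto_id.const_mul_atBot hH
      have := (Real.tendsto_exp_atBot.comp h0).add_const c
      simpa using this
    have ht2 : Tendsto (fun a : ℝ => Real.log (f b) - Real.log (f a)) atBot
        (𝓝 (Real.log (f b) - Real.log c)) :=
      tendsto_const_nhds.sub (((Real.continuousAt_log hc.ne').tendsto).comp htend)
    have := ht1.mul ht2
    simpa using this
end

section
/- Let H > 0 and let f : ℝ → ℝ be continuously differentiable with f(t) > 0 for all t, f(t) → c as t → −∞ for some c > 0, and f(t) = exp(H t) for all t ≥ t₀ for some t₀. Then for every q > 0, lim_{b → ∞} (1/((q+1)b)) ∫_{−b}^{q b} f'(t)/f(t) dt = qH/(q+1), a value lying strictly between 0 and H. -/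
open Real Filter Topology intervalIntegral

/-- For a loitering-then-de Sitter scale factor and any `q > 0`, the averaged
Hubble parameter over `[-b, q b]` tends to `q H / (q + 1)` as `b → ∞`, a value
strictly between `0` and `H`. -/
theorem Havg_parameterized_limit (H : ℝ) (hH : 0 < H) (f : ℝ → ℝ)
    (hf : ContDiff ℝ 1 f) (hpos : ∀ t : ℝ, 0 < f t)
    (c : ℝ) (hc : 0 < c) (hlim : Tendsto f atBot (𝓝 c))
    (t₀ : ℝ) (hdS : ∀ t : ℝ, t₀ ≤ t → f t = Real.exp (H * t))
    (q : ℝ) (hq : 0 < q) :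
    Tendsto (fun b : ℝ =>
        (1 / ((q + 1) * b)) * ∫ t in (-b)..(q * b), deriv f t / f t)
      atTop (𝓝 (q * H / (q + 1))) ∧
    0 < q * H / (q + 1) ∧ q * H / (q + 1) < H := by
  have hq1 : (0:ℝ) < q + 1 := by linarith
  have hfd : Differentiable ℝ f := hf.differentiable one_ne_zero
  have hderiv : ∀ t : ℝ, HasDerivAt (fun s => Real.log (f s)) (deriv f t / f t) t := by
    intro t
    have h2 := (Real.hasDerivAt_log (hpos t).ne').comp t (hfd t).hasDerivAt
    rw [div_eq_inv_mul]; exact h2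
  have hcont : Continuous (fun t => deriv f t / f t) :=
    (hf.continuous_deriv le_rfl).div hfd.continuous (fun t => (hpos t).ne')
  have hint : ∀ a b : ℝ, (∫ t in a..b, deriv f t / f t)
      = Real.log (f b) - Real.log (f a) := by
    intro a b
    exact intervalIntegral.integral_eq_sub_of_hasDerivAt
      (fun t _ => hderiv t) (hcont.intervalIntegrable _ _)
  have hlog : Tendsto (fun b : ℝ => Real.log (f (-b))) atTop (𝓝 (Real.log c)) :=
    ((Real.continuousAt_log hc.ne').tendsto.comp hlim).comp tendsto_neg_atTop_atBot
  have hsmall : Tendsto (fun b : ℝ => 1 / ((q + 1) * b)) atTop (𝓝 0) := by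
    have h1 : Tendsto (fun b : ℝ => (q + 1) * b) atTop atTop :=
      Tendsto.const_mul_atTop hq1 tendsto_id
    exact h1.inv_tendsto_atTop.congr (fun b => (one_div _).symm)
  have hmain : Tendsto
      (fun b : ℝ => q * H / (q + 1) - (1 / ((q + 1) * b)) * Real.log (f (-b)))
      atTop (𝓝 (q * H / (q + 1))) := by
    have := tendsto_const_nhds (x := q * H / (q + 1)) (f := atTop (α := ℝ)) |>.sub
      (hsmall.mul hlog)
    simpa using this
  have heq : (fun b : ℝ =>
      (1 / ((q + 1) * b)) * ∫ t in (-b)..(q * b), deriv f t / f t)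
      =ᶠ[atTop] (fun b : ℝ =>
      q * H / (q + 1) - (1 / ((q + 1) * b)) * Real.log (f (-b))) := by
    filter_upwards [eventually_ge_atTop (max 1 (t₀ / q))] with b hb
    have hb1 : (1:ℝ) ≤ b := le_trans (le_max_left _ _) hb
    have hb0 : (0:ℝ) < b := by linarith
    have hqb : t₀ ≤ q * b := by
      have := le_trans (le_max_right _ _) hb
      calc t₀ = q * (t₀ / q) := by field_simp
        _ ≤ q * b := by nlinarith
    rw [hint, hdS _ hqb, Real.log_exp]
    field_simp
  refine ⟨hmain.congr' heq.symm, by positivity, ?_⟩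
  rw [div_lt_iff₀ hq1]
  nlinarith
end

section
/- Fix H > 0 and c > 0, and let f(t) = exp(H t) + c. Then for all real t_i < t_f, the averaged Hubble parameter satisfies 0 < (1/(t_f − t_i)) ∫_{t_i}^{t_f} f'(t)/f(t) dt < H·exp(H t_f)/(exp(H t_f) + c) < H. -/
open Real Filter Topology intervalIntegral

/-- For `f t = exp (H t) + c` with `H, c > 0`, the averaged Hubble parameter
over any compact interval `[t_i, t_f]` is strictly positive and strictly
bounded above by `H · exp (H t_f) / (exp (H t_f) + c) < H`. -/
theorem Havg_bounds_eternal_inflation (H c : ℝ) (hH : 0 < H) (hc : 0 < c)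
    (f : ℝ → ℝ) (hf : f = fun t : ℝ => Real.exp (H * t) + c)
    (ti tf : ℝ) (hlt : ti < tf) :
    0 < (1 / (tf - ti)) * ∫ t in ti..tf, deriv f t / f t ∧
    (1 / (tf - ti)) * (∫ t in ti..tf, deriv f t / f t) <
      H * Real.exp (H * tf) / (Real.exp (H * tf) + c) ∧
    H * Real.exp (H * tf) / (Real.exp (H * tf) + c) < H := by
  have hderiv : ∀ t, deriv f t = H * Real.exp (H * t) := by
    intro t
    rw [hf]
    have h1 : HasDerivAt (fun t : ℝ => Real.exp (H * t) + c)
        (Real.exp (H * t) * (H * 1)) t :=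
      ((Real.hasDerivAt_exp (H * t)).comp t
        ((hasDerivAt_id t).const_mul H)).add_const c
    rw [h1.deriv]; ring
  have hfpos : ∀ t, 0 < f t := by
    intro t; rw [hf]; positivity
  set g : ℝ → ℝ := fun t => deriv f t / f t with hg
  have hgeq : g = fun t => H * Real.exp (H * t) / (Real.exp (H * t) + c) := by
    funext t; show deriv f t / f t = _; rw [hderiv t, hf]
  have hgcont : Continuous g := by
    rw [hgeq]
    exact (continuous_const.mul (Real.continuous_exp.comp (continuous_const.mul continuous_id))).div
      ((Real.continuous_exp.comp (continuous_const.mul continuous_id)).add continuous_const)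
      (fun t => by positivity)
  have hgpos : ∀ t, 0 < g t := by
    intro t; rw [hgeq]; positivity
  obtain ⟨B, hB⟩ : ∃ B : ℝ, B = H * Real.exp (H * tf) / (Real.exp (H * tf) + c) := ⟨_, rfl⟩
  have hBpos : 0 < B := by rw [hB]; positivity
  have hmono : ∀ x, x ≤ tf → g x ≤ B := by
    intro x hx
    rw [hgeq, hB]
    rw [div_le_div_iff₀ (by positivity) (by positivity)]
    have h2 := Real.exp_le_exp.mpr (mul_le_mul_of_nonneg_left hx hH.le)
    nlinarith [mul_le_mul_of_nonneg_left h2 (mul_pos hH hc).le]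
  have hstrict : g ti < B := by
    rw [hgeq, hB]
    rw [div_lt_div_iff₀ (by positivity) (by positivity)]
    have h2 := Real.exp_lt_exp.mpr (mul_lt_mul_of_pos_left hlt hH)
    nlinarith [mul_lt_mul_of_pos_left h2 (mul_pos hH hc)]
  have hpos : 0 < ∫ t in ti..tf, g t :=
    intervalIntegral_pos_of_pos (hgcont.intervalIntegrable ti tf) hgpos hlt
  have hint : (∫ t in ti..tf, g t) < (tf - ti) * B := by
    have h1 : (∫ t in ti..tf, g t) < ∫ _t in ti..tf, B := by
      apply intervalIntegral.integral_lt_integral_of_continuousOn_of_le_of_exists_lt hlt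
        hgcont.continuousOn continuousOn_const
      · exact fun x hx => hmono x hx.2
      · exact ⟨ti, ⟨le_refl _, hlt.le⟩, hstrict⟩
    simpa [smul_eq_mul] using h1
  have hd : 0 < tf - ti := sub_pos.mpr hlt
  refine ⟨by positivity, ?_, ?_⟩
  · rw [← hB]
    calc (1 / (tf - ti)) * (∫ t in ti..tf, g t)
        < (1 / (tf - ti)) * ((tf - ti) * B) := by
          exact mul_lt_mul_of_pos_left hint (by positivity)
      _ = B := by field_simp
  · rw [div_lt_iff₀ (by positivity)]
    nlinarith [Real.exp_pos (H * tf)]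
end

section
/- Let H > 0, 0 < c < 1, and let f : ℝ → ℝ be continuously differentiable, monotone nondecreasing, with f(t) = c for all t ≤ −1 and f(t) = exp(H t) for all t ≥ 0. Then for every v ∈ (0, H] there exist real numbers a < b such that (1/(b−a)) ∫_a^b f'(t)/f(t) dt = v. -/
open Real Filter Topology intervalIntegral

lemma integral_deriv_div_self (f : ℝ → ℝ) (hf : ContDiff ℝ 1 f)
    (hpos : ∀ t, 0 < f t) (a b : ℝ) :
    ∫ t in a..b, deriv f t / f t = Real.log (f b) - Real.log (f a) := by
  apply intervalIntegral.integral_eq_sub_of_hasDerivAt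
  · intro x _
    exact ((hf.differentiable one_ne_zero x).hasDerivAt).log (hpos x).ne'
  · exact (((hf.continuous_deriv le_rfl).continuousOn).div
      hf.continuous.continuousOn (fun x _ => (hpos x).ne')).intervalIntegrable

/-- For the loitering-then-de Sitter monster (constant `c` on `(-∞,-1]`,
`exp (H t)` on `[0,∞)`, monotone, `C¹`), the compact-interval averaged Hubble
parameter realizes every value `v ∈ (0, H]` for a suitable interval `[a, b]`. -/
theorem Havg_realizes_Ioc (H c : ℝ) (hH : 0 < H) (hc0 : 0 < c) (hc1 : c < 1)
    (f : ℝ → ℝ) (hf : ContDiff ℝ 1 f) (hmono : Monotone f)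
    (hpast : ∀ t : ℝ, t ≤ -1 → f t = c)
    (hdS : ∀ t : ℝ, 0 ≤ t → f t = Real.exp (H * t))
    (v : ℝ) (hv : v ∈ Set.Ioc 0 H) :
    ∃ a b : ℝ, a < b ∧
      (1 / (b - a)) * ∫ t in a..b, deriv f t / f t = v := by
  obtain ⟨hv0, hvH⟩ := hv
  have hpos : ∀ t, 0 < f t := by
    intro t
    rcases le_or_gt t (-1) with h | h
    · rw [hpast t h]; exact hc0
    · have := hmono h.le
      rw [hpast (-1) le_rfl] at this
      linarith
  have hlc : Real.log c < 0 := Real.log_neg hc0 hc1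
  have hint : ∀ a b : ℝ, ∫ t in a..b, deriv f t / f t
      = Real.log (f b) - Real.log (f a) :=
    integral_deriv_div_self f hf hpos
  rcases eq_or_lt_of_le hvH with rfl | hvH
  · -- v = H : use [0, 1]
    refine ⟨0, 1, one_pos, ?_⟩
    rw [hint, hdS 1 zero_le_one, hdS 0 le_rfl, Real.log_exp, Real.log_exp]
    norm_num
  rcases le_or_gt v (-Real.log c) with hcase | hcase
  · -- v ≤ -log c : use [log c / v, 0]
    have ha : Real.log c / v ≤ -1 := by
      rw [div_le_iff₀ hv0]; linarith
    refine ⟨Real.log c / v, 0, by linarith, ?_⟩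
    rw [hint, hdS 0 le_rfl, hpast _ ha, mul_zero, Real.exp_zero, Real.log_one]
    have hlcne : Real.log c ≠ 0 := ne_of_lt hlc
    field_simp
    simp [hlcne]
  · -- -log c < v < H : use [-1, (v + log c)/(H - v)]
    set b := (v + Real.log c) / (H - v) with hb
    have hHv : 0 < H - v := by linarith
    have hbb : 0 ≤ b := div_nonneg (by linarith) hHv.le
    refine ⟨-1, b, by linarith, ?_⟩
    rw [hint, hdS b hbb, hpast (-1) le_rfl, Real.log_exp]
    have hb1 : b - (-1) = (H + Real.log c) / (H - v) := by
      rw [hb]; field_simp; ring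
    have hHlc : 0 < H + Real.log c := by linarith
    rw [hb1, hb]
    field_simp
    ring
end

section
/- Let H > 0, c > 0, and let f : ℝ → ℝ be twice differentiable with f(t) > 0 for all t, f(t) = c for all t ≤ −1, and f(t) = exp(H t) for all t ≥ 0. Then there exists t ∈ (−1, 0) at which the derivative of the Hubble parameter h(t) = f'(t)/f(t) satisfies h'(t) = H > 0; in particular h' > 0 somewhere in the transition region. -/
open Real Filter Topology

/-- Any twice differentiable positive scale factor gluing a loitering phase
(`f = c` for `t ≤ -1`) to a de Sitter phase (`f = exp (H t)` for `t ≥ 0`) has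
a point in the transition region `(-1, 0)` where the derivative of the Hubble
parameter `h = f'/f` equals `H > 0`; in particular `h' > 0` somewhere there,
so the NEC/WEC are violated in the transition zone. -/
theorem transition_violates_NEC (H c : ℝ) (hH : 0 < H) (hc : 0 < c)
    (f : ℝ → ℝ) (hpos : ∀ t : ℝ, 0 < f t)
    (hdiff : ∀ t : ℝ, DifferentiableAt ℝ f t)
    (hdiff2 : ∀ t : ℝ, DifferentiableAt ℝ (deriv f) t)
    (hpast : ∀ t : ℝ, t ≤ -1 → f t = c)
    (hdS : ∀ t : ℝ, 0 ≤ t → f t = Real.exp (H * t)) :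
    ∃ t ∈ Set.Ioo (-1 : ℝ) 0,
      deriv (fun s : ℝ => deriv f s / f s) t = H ∧
      0 < deriv (fun s : ℝ => deriv f s / f s) t := by
  set h : ℝ → ℝ := fun s => deriv f s / f s with hh
  have hhdiff : ∀ t : ℝ, DifferentiableAt ℝ h t := fun t =>
    (hdiff2 t).div (hdiff t) (ne_of_gt (hpos t))
  -- deriv f (-1) = 0
  have hd1 : deriv f (-1) = 0 := by
    have hu : UniqueDiffWithinAt ℝ (Set.Iic (-1 : ℝ)) (-1) :=
      uniqueDiffOn_Iic (-1 : ℝ) (-1) Set.self_mem_Iic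
    have h1 : derivWithin f (Set.Iic (-1 : ℝ)) (-1) = deriv f (-1) :=
      (hdiff (-1)).derivWithin hu
    have h2 : derivWithin f (Set.Iic (-1 : ℝ)) (-1)
        = derivWithin (fun _ : ℝ => c) (Set.Iic (-1 : ℝ)) (-1) := by
      apply derivWithin_congr
      · intro x hx; exact hpast x hx
      · exact hpast (-1) le_rfl
    rw [← h1, h2, derivWithin_fun_const, Pi.zero_apply]
  -- deriv f 0 = H
  have hd0 : deriv f 0 = H := by
    have hu : UniqueDiffWithinAt ℝ (Set.Ici (0 : ℝ)) 0 :=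
      uniqueDiffOn_Ici (0 : ℝ) 0 Set.self_mem_Ici
    have h1 : derivWithin f (Set.Ici (0 : ℝ)) 0 = deriv f 0 :=
      (hdiff 0).derivWithin hu
    have h2 : derivWithin f (Set.Ici (0 : ℝ)) 0
        = derivWithin (fun t : ℝ => Real.exp (H * t)) (Set.Ici (0 : ℝ)) 0 := by
      apply derivWithin_congr
      · intro x hx; exact hdS x hx
      · exact hdS 0 le_rfl
    have hde : HasDerivAt (fun t : ℝ => Real.exp (H * t)) (Real.exp (H * 0) * H) 0 := by
      have := (Real.hasDerivAt_exp (H * 0)).comp 0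
        ((hasDerivAt_id 0).const_mul H)
      simpa [mul_comm, Function.comp_def] using this
    have h3 : derivWithin (fun t : ℝ => Real.exp (H * t)) (Set.Ici (0 : ℝ)) 0
        = Real.exp (H * 0) * H := (hde.hasDerivWithinAt).derivWithin hu
    rw [← h1, h2, h3]
    simp
  have hf0 : f 0 = 1 := by simpa using hdS 0 le_rfl
  have hfm1 : f (-1) = c := hpast (-1) le_rfl
  have hh0 : h 0 = H := by simp [hh, hd0, hf0]
  have hhm1 : h (-1) = 0 := by simp [hh, hd1]
  obtain ⟨t, ht, hslope⟩ := exists_deriv_eq_slope h (by norm_num : (-1 : ℝ) < 0)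
    (fun x _ => (hhdiff x).continuousAt.continuousWithinAt)
    (fun x _ => (hhdiff x).differentiableWithinAt)
  refine ⟨t, ht, ?_, ?_⟩
  · rw [hslope, hh0, hhm1]; norm_num
  · rw [hslope, hh0, hhm1]; norm_num; exact hH
end

section
/- Let H > 0, 0 < c < 1, and let f : ℝ → ℝ be continuously differentiable, monotone nondecreasing, with f(t) = c for all t ≤ −1 and f(t) = exp(H t) for all t ≥ 0. Then simultaneously: (i) there is some t₁ (e.g. any t₁ > 0) with f''(t₁) > 0, so the associated GFRW is an inflationary spacetime; (ii) there exist a < b with (1/(b−a)) ∫_a^b f'(t)/f(t) dt = H > 0, so the averaged Hubble parameter is strictly positive over some compact interval; and (iii) f(t) ≥ c > 0 for all t, so by Sánchez's completeness criterion all four completeness integrals ∫_{±∞}^{t₀} f dt and ∫_{±∞}^{t₀} f/√(f²+1) dt diverge for every t₀. -/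
open Real Filter Topology intervalIntegral

lemma deriv_on_pos (H : ℝ) (f : ℝ → ℝ)
    (hdS : ∀ t : ℝ, 0 ≤ t → f t = Real.exp (H * t))
    {t : ℝ} (ht : 0 < t) : deriv f t = H * Real.exp (H * t) := by
  have hev : f =ᶠ[𝓝 t] fun s => Real.exp (H * s) := by
    filter_upwards [Ioi_mem_nhds ht] with s hs
    exact hdS s (le_of_lt hs)
  rw [hev.deriv_eq]
  have h : HasDerivAt (fun s : ℝ => Real.exp (H * s)) (Real.exp (H * t) * (H * 1)) t :=
    (Real.hasDerivAt_exp (H * t)).comp t ((hasDerivAt_id t).const_mul H)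
  rw [h.deriv]; ring

lemma tendsto_integrals (g : ℝ → ℝ) (hg : Continuous g) (m : ℝ) (hm : 0 < m)
    (hlb : ∀ t, m ≤ g t) (t₀ : ℝ) :
    Tendsto (fun A : ℝ => ∫ t in A..t₀, g t) atBot atTop ∧
    Tendsto (fun B : ℝ => ∫ t in t₀..B, g t) atTop atTop := by
  constructor
  · have h1 : Tendsto (fun A : ℝ => m * (t₀ - A)) atBot atTop := by
      have h := (tendsto_atTop_add_const_left atBot t₀ (tendsto_neg_atBot_atTop (G := ℝ))).const_mul_atTop hm
      simpa [sub_eq_add_neg] using h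
    apply tendsto_atTop_mono' atBot _ h1
    filter_upwards [eventually_le_atBot t₀] with A hA
    have := intervalIntegral.integral_mono_on hA (_root_.intervalIntegrable_const (c := m) (μ := MeasureTheory.volume))
      (hg.intervalIntegrable A t₀) (fun x _ => hlb x)
    simpa [mul_comm] using this
  · have h1 : Tendsto (fun B : ℝ => m * (B - t₀)) atTop atTop := by
      have h := (tendsto_atTop_add_const_right atTop (-t₀)
        (tendsto_id (α := ℝ))).const_mul_atTop hm
      simpa [sub_eq_add_neg] using h
    apply tendsto_atTop_mono' atTop _ h1
    filter_upwards [eventually_ge_atTop t₀] with B hB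
    have := intervalIntegral.integral_mono_on hB (_root_.intervalIntegrable_const (c := m) (μ := MeasureTheory.volume))
      (hg.intervalIntegrable t₀ B) (fun x _ => hlb x)
    simpa [mul_comm] using this

/-- The central counterexample: the loitering-then-de Sitter monster is
(i) inflationary (`f'' > 0` somewhere), (ii) has strictly positive averaged
Hubble parameter (equal to `H > 0`) over some compact interval, and yet
(iii) is bounded below by `c > 0` so all four Sánchez completeness integrals
diverge, making the GFRW geodesically complete. -/
theorem inflationary_yet_complete (H c : ℝ) (hH : 0 < H) (hc0 : 0 < c)
    (hc1 : c < 1) (f : ℝ → ℝ) (hf : ContDiff ℝ 1 f) (hmono : Monotone f)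
    (hpast : ∀ t : ℝ, t ≤ -1 → f t = c)
    (hdS : ∀ t : ℝ, 0 ≤ t → f t = Real.exp (H * t)) :
    (∃ t₁ : ℝ, 0 < deriv (deriv f) t₁) ∧
    (∃ a b : ℝ, a < b ∧
      (1 / (b - a)) * ∫ t in a..b, deriv f t / f t = H) ∧
    0 < H ∧
    (∀ t : ℝ, c ≤ f t) ∧
    (∀ t₀ : ℝ,
      Tendsto (fun A : ℝ => ∫ t in A..t₀, f t) atBot atTop ∧
      Tendsto (fun B : ℝ => ∫ t in t₀..B, f t) atTop atTop ∧
      Tendsto (fun A : ℝ => ∫ t in A..t₀, f t / Real.sqrt ((f t) ^ 2 + 1))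
        atBot atTop ∧
      Tendsto (fun B : ℝ => ∫ t in t₀..B, f t / Real.sqrt ((f t) ^ 2 + 1))
        atTop atTop) := by
  have hlb : ∀ t : ℝ, c ≤ f t := by
    intro t
    rcases le_total t (-1) with h | h
    · exact (hpast t h).ge
    · calc c = f (-1) := (hpast (-1) le_rfl).symm
        _ ≤ f t := hmono h
  refine ⟨⟨1, ?_⟩, ⟨1, 2, one_lt_two, ?_⟩, hH, hlb, ?_⟩
  · -- second derivative at t₁ = 1
    have hev : deriv f =ᶠ[𝓝 (1 : ℝ)] fun s => H * Real.exp (H * s) := by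
      filter_upwards [Ioi_mem_nhds (zero_lt_one' ℝ)] with s hs
      exact deriv_on_pos H f hdS hs
    rw [hev.deriv_eq]
    have h : HasDerivAt (fun s : ℝ => H * Real.exp (H * s))
        (H * (Real.exp (H * 1) * (H * 1))) 1 :=
      (((Real.hasDerivAt_exp (H * 1)).comp 1 ((hasDerivAt_id 1).const_mul H))).const_mul H
    rw [h.deriv]
    positivity
  · -- averaged Hubble parameter over [1,2]
    have : (∫ t in (1:ℝ)..2, deriv f t / f t) = ∫ t in (1:ℝ)..2, H := by
      apply intervalIntegral.integral_congr
      intro x hx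
      rw [Set.uIcc_of_le (by norm_num)] at hx
      have hx0 : 0 < x := lt_of_lt_of_le one_pos hx.1
      show deriv f x / f x = H
      rw [deriv_on_pos H f hdS hx0, hdS x hx0.le]
      field_simp
    rw [this, intervalIntegral.integral_const]
    norm_num
  · intro t₀
    have hfc : Continuous f := hf.continuous
    have h1 := tendsto_integrals f hfc c hc0 hlb t₀
    have hgc : Continuous fun t => f t / Real.sqrt ((f t) ^ 2 + 1) := by
      apply hfc.div (by continuity)
      intro x
      positivity
    have hmpos : 0 < c / Real.sqrt (c ^ 2 + 1) := by positivity
    have hglb : ∀ t, c / Real.sqrt (c ^ 2 + 1) ≤ f t / Real.sqrt ((f t) ^ 2 + 1) := by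
      intro t
      have hft : 0 < f t := lt_of_lt_of_le hc0 (hlb t)
      rw [div_le_div_iff₀ (by positivity) (by positivity)]
      have h1 : Real.sqrt ((f t) ^ 2 + 1) * Real.sqrt (c ^ 2 + 1)
          = Real.sqrt (((f t) ^ 2 + 1) * (c ^ 2 + 1)) :=
        (Real.sqrt_mul (by positivity) _).symm
      have h2 : c * Real.sqrt ((f t) ^ 2 + 1)
          = Real.sqrt (c ^ 2 * ((f t) ^ 2 + 1)) := by
        rw [Real.sqrt_mul (by positivity), Real.sqrt_sq hc0.le]
      have h3 : f t * Real.sqrt (c ^ 2 + 1)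
          = Real.sqrt ((f t) ^ 2 * (c ^ 2 + 1)) := by
        rw [Real.sqrt_mul (by positivity), Real.sqrt_sq hft.le]
      rw [h2, h3]
      apply Real.sqrt_le_sqrt
      have hc2 : c ^ 2 ≤ (f t) ^ 2 := by
        apply sq_le_sq' (by nlinarith) (hlb t)
      nlinarith
    have h2 := tendsto_integrals _ hgc _ hmpos hglb t₀
    exact ⟨h1.1, h1.2, h2.1, h2.2⟩
end
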